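/- As ε → 0⁺, ε^{(k−1)/(n−1)} tends to 1 if k = 1 and to 0 if 2 ≤ k ≤ n (for fixed n ≥ 2); consequently the weight-k coefficients of the diagonal MPS family above converge to the coefficients of the (unnormalized) n-qubit W state, which are 1 for k = 1 and 0 for k ≠ 1, as functions on weights 0 ≤ k ≤ n. -/
import Mathlib


open Filter

private lemma aux_main (n : ℕ) (hn : 2 ≤ n) :
    ∀ k : ℕ, 1 ≤ k → k ≤ n →
      Tendsto (fun ε : ℝ => ε ^ (((k : ℝ) - 1) / ((n : ℝ) - 1)))
        (nhdsWithin 0 (Set.Ioi 0))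
        (nhds (if k = 1 then (1 : ℝ) else 0)) := by
  intro k hk1 hkn
  rcases eq_or_lt_of_le hk1 with h1 | h2
  · subst h1
    have heq : (fun ε : ℝ => ε ^ ((((1:ℕ) : ℝ) - 1) / ((n : ℝ) - 1))) = fun _ => (1 : ℝ) := by
      funext ε
      norm_num
    rw [heq, if_pos rfl]
    exact tendsto_const_nhds
  · have hk : k ≠ 1 := by omega
    rw [if_neg hk]
    have hc : 0 < ((k : ℝ) - 1) / ((n : ℝ) - 1) := by
      have h1 : (1:ℝ) < (k:ℝ) := by exact_mod_cast h2
      have h2' : (1:ℝ) < (n:ℝ) := by exact_mod_cast hn.trans_lt' one_lt_two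
      exact div_pos (by linarith) (by linarith)
    have := (Real.continuousAt_rpow_const 0 _ (Or.inr hc.le)).tendsto
    rw [Real.zero_rpow hc.ne'] at this
    exact this.mono_left nhdsWithin_le_nhds

/-- As `ε → 0⁺`, `ε^{(k−1)/(n−1)}` tends to `1` if `k = 1` and to `0` if `2 ≤ k ≤ n`
(for fixed `n ≥ 2`); consequently the weight-`k` coefficients of the diagonal MPS family
(`0` for even `k`, `ε^{(k−1)/(n−1)}` for odd `k`) converge, for every weight `0 ≤ k ≤ n`,
to the unnormalized W-state coefficients: `1` for `k = 1` and `0` otherwise. -/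
theorem stmt_17 (n : ℕ) (hn : 2 ≤ n) :
    (∀ k : ℕ, 1 ≤ k → k ≤ n →
      Tendsto (fun ε : ℝ => ε ^ (((k : ℝ) - 1) / ((n : ℝ) - 1)))
        (nhdsWithin 0 (Set.Ioi 0))
        (nhds (if k = 1 then (1 : ℝ) else 0)))
    ∧ ∀ k : ℕ, k ≤ n →
      Tendsto (fun ε : ℝ =>
          if Even k then (0 : ℝ) else ε ^ (((k : ℝ) - 1) / ((n : ℝ) - 1)))
        (nhdsWithin 0 (Set.Ioi 0))
        (nhds (if k = 1 then (1 : ℝ) else 0)) := by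
  refine ⟨aux_main n hn, fun k hkn => ?_⟩
  by_cases he : Even k
  · have hk : k ≠ 1 := by rintro rfl; exact (Nat.not_even_one) he
    simp only [if_pos he, if_neg hk]
    exact tendsto_const_nhds
  · have hk1 : 1 ≤ k := Nat.one_le_iff_ne_zero.mpr (by rintro rfl; exact he Even.zero)
    simp only [if_neg he]
    exact aux_main n hn k hk1 hkn
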